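/- Let U = (ρ, v, u, F₁₁, F₂₁, F₁₂, F₂₂) with ρ > 0, p'(ρ) =: c² > 0, and let Φ be a function with ∂₂Φ ≠ 0 satisfying the eikonal conditions ∂ₜΦ + v ∂₁Φ − u = 0, F₁₁ ∂₁Φ − F₂₁ = 0 and F₁₂ ∂₁Φ − F₂₂ = 0. Let A₁(U) and A₂(U) be the 7×7 flux Jacobian matrices of the 2D compressible elastodynamics system (in the variables (ρ, v, u, F₁₁, F₂₁, F₁₂, F₂₂)), and define the boundary matrix Ã₂ = (1/∂₂Φ)(A₂(U) − ∂ₜΦ·I − ∂₁Φ·A₁(U)). Then the characteristic polynomial of Ã₂ is det(λI − Ã₂) = λ⁵ (λ² − c²(1 + (∂₁Φ)²)/(∂₂Φ)²). In particular Ã₂ has rank 2, with eigenvalues 0 (multiplicity 5) and ± c√(1+(∂₁Φ)²)/∂₂Φ (each simple). -/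

import Mathlib

theorem vec7_0 {α : Type*} (a0 a1 a2 a3 a4 a5 a6 : α) (h : 0 < 7) :
    ![a0,a1,a2,a3,a4,a5,a6] ⟨0, h⟩ = a0 := rfl
theorem vec7_1 {α : Type*} (a0 a1 a2 a3 a4 a5 a6 : α) (h : 1 < 7) :
    ![a0,a1,a2,a3,a4,a5,a6] ⟨1, h⟩ = a1 := rfl
theorem vec7_2 {α : Type*} (a0 a1 a2 a3 a4 a5 a6 : α) (h : 2 < 7) :
    ![a0,a1,a2,a3,a4,a5,a6] ⟨2, h⟩ = a2 := rfl
theorem vec7_3 {α : Type*} (a0 a1 a2 a3 a4 a5 a6 : α) (h : 3 < 7) :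
    ![a0,a1,a2,a3,a4,a5,a6] ⟨3, h⟩ = a3 := rfl
theorem vec7_4 {α : Type*} (a0 a1 a2 a3 a4 a5 a6 : α) (h : 4 < 7) :
    ![a0,a1,a2,a3,a4,a5,a6] ⟨4, h⟩ = a4 := rfl
theorem vec7_5 {α : Type*} (a0 a1 a2 a3 a4 a5 a6 : α) (h : 5 < 7) :
    ![a0,a1,a2,a3,a4,a5,a6] ⟨5, h⟩ = a5 := rfl
theorem vec7_6 {α : Type*} (a0 a1 a2 a3 a4 a5 a6 : α) (h : 6 < 7) :
    ![a0,a1,a2,a3,a4,a5,a6] ⟨6, h⟩ = a6 := rfl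
theorem vec2_0 {α : Type*} (a0 a1 : α) (h : 0 < 2) : ![a0,a1] ⟨0, h⟩ = a0 := rfl
theorem vec2_1 {α : Type*} (a0 a1 : α) (h : 1 < 2) : ![a0,a1] ⟨1, h⟩ = a1 := rfl

set_option maxHeartbeats 1000000 in
theorem one7 : (1 : Matrix (Fin 7) (Fin 7) ℝ) =
    !![1,0,0,0,0,0,0; 0,1,0,0,0,0,0; 0,0,1,0,0,0,0; 0,0,0,1,0,0,0;
       0,0,0,0,1,0,0; 0,0,0,0,0,1,0; 0,0,0,0,0,0,1] := by
  ext i j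
  fin_cases i <;> fin_cases j <;> rfl


set_option maxRecDepth 4000 in
set_option maxHeartbeats 4000000 in
/-- Under the eikonal conditions, the boundary matrix
`Ã₂ = (1/∂₂Φ)(A₂(U) − ∂ₜΦ·I − ∂₁Φ·A₁(U))` of the 2D compressible elastodynamics
system has characteristic polynomial `λ⁵(λ² − c²(1 + (∂₁Φ)²)/(∂₂Φ)²)`;
in particular it has rank 2. -/
theorem boundary_matrix_charpoly_and_rank
    (ρ v u F11 F21 F12 F22 c dt d1 d2 : ℝ)
    (hρ : 0 < ρ) (hc : 0 < c) (hd2 : d2 ≠ 0)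
    (heik1 : dt + v * d1 - u = 0)
    (heik2 : F11 * d1 - F21 = 0)
    (heik3 : F12 * d1 - F22 = 0) :
    let A1 : Matrix (Fin 7) (Fin 7) ℝ :=
      !![v, ρ, 0, 0, 0, 0, 0;
         c ^ 2 / ρ, v, 0, -F11, 0, -F12, 0;
         0, 0, v, 0, -F11, 0, -F12;
         0, -F11, 0, v, 0, 0, 0;
         0, 0, -F11, 0, v, 0, 0;
         0, -F12, 0, 0, 0, v, 0;
         0, 0, -F12, 0, 0, 0, v]
    let A2 : Matrix (Fin 7) (Fin 7) ℝ :=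
      !![u, 0, ρ, 0, 0, 0, 0;
         0, u, 0, -F21, 0, -F22, 0;
         c ^ 2 / ρ, 0, u, 0, -F21, 0, -F22;
         0, -F21, 0, u, 0, 0, 0;
         0, 0, -F21, 0, u, 0, 0;
         0, -F22, 0, 0, 0, u, 0;
         0, 0, -F22, 0, 0, 0, u]
    let At : Matrix (Fin 7) (Fin 7) ℝ :=
      (d2)⁻¹ • (A2 - dt • (1 : Matrix (Fin 7) (Fin 7) ℝ) - d1 • A1)
    (∀ lam : ℝ,
        Matrix.det (lam • (1 : Matrix (Fin 7) (Fin 7) ℝ) - At) =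
          lam ^ 5 * (lam ^ 2 - c ^ 2 * (1 + d1 ^ 2) / d2 ^ 2)) ∧
    At.rank = 2 := by
  intro A1 A2 At
  have hρ' : ρ ≠ 0 := ne_of_gt hρ
  have hdt : dt = u - v * d1 := by linarith
  have hF21 : F21 = F11 * d1 := by linarith
  have hF22 : F22 = F12 * d1 := by linarith
  have hB : At = !![0, -(d1 * ρ) / d2, ρ / d2, 0, 0, 0, 0;
      -(d1 * c ^ 2) / (ρ * d2), 0, 0, 0, 0, 0, 0;
      c ^ 2 / (ρ * d2), 0, 0, 0, 0, 0, 0;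
      0, 0, 0, 0, 0, 0, 0;
      0, 0, 0, 0, 0, 0, 0;
      0, 0, 0, 0, 0, 0, 0;
      0, 0, 0, 0, 0, 0, 0] := by
    subst hdt hF21 hF22
    ext i j
    fin_cases i <;> fin_cases j <;>
      simp only [At, A1, A2, one7, Matrix.smul_apply, Matrix.sub_apply, Matrix.of_apply,
        vec7_0, vec7_1, vec7_2, vec7_3, vec7_4, vec7_5, vec7_6, smul_eq_mul,
        Matrix.cons_val_zero, Matrix.cons_val_one, Matrix.head_cons] <;>
      first | rfl | ring | norm_num
  refine ⟨?_, ?_⟩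
  · intro lam
    rw [hB]
    have h1 : lam • (1 : Matrix (Fin 7) (Fin 7) ℝ) -
        !![0, -(d1 * ρ) / d2, ρ / d2, 0, 0, 0, 0;
          -(d1 * c ^ 2) / (ρ * d2), 0, 0, 0, 0, 0, 0;
          c ^ 2 / (ρ * d2), 0, 0, 0, 0, 0, 0;
          0, 0, 0, 0, 0, 0, 0;
          0, 0, 0, 0, 0, 0, 0;
          0, 0, 0, 0, 0, 0, 0;
          0, 0, 0, 0, 0, 0, 0] =
        !![lam, (d1 * ρ) / d2, -(ρ / d2), 0, 0, 0, 0;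
          (d1 * c ^ 2) / (ρ * d2), lam, 0, 0, 0, 0, 0;
          -(c ^ 2 / (ρ * d2)), 0, lam, 0, 0, 0, 0;
          0, 0, 0, lam, 0, 0, 0;
          0, 0, 0, 0, lam, 0, 0;
          0, 0, 0, 0, 0, lam, 0;
          0, 0, 0, 0, 0, 0, lam] := by
      ext i j
      fin_cases i <;> fin_cases j <;>
        simp only [one7, Matrix.smul_apply, Matrix.sub_apply, Matrix.of_apply,
          vec7_0, vec7_1, vec7_2, vec7_3, vec7_4, vec7_5, vec7_6, smul_eq_mul,
          Matrix.cons_val_zero, Matrix.cons_val_one, Matrix.head_cons] <;>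
        first | rfl | ring | norm_num
    rw [h1]
    have hM : (!![lam, (d1 * ρ) / d2, -(ρ / d2), 0, 0, 0, 0;
          (d1 * c ^ 2) / (ρ * d2), lam, 0, 0, 0, 0, 0;
          -(c ^ 2 / (ρ * d2)), 0, lam, 0, 0, 0, 0;
          0, 0, 0, lam, 0, 0, 0;
          0, 0, 0, 0, lam, 0, 0;
          0, 0, 0, 0, 0, lam, 0;
          0, 0, 0, 0, 0, 0, lam] : Matrix (Fin 7) (Fin 7) ℝ) =
        Matrix.reindex finSumFinEquiv finSumFinEquiv
          (Matrix.fromBlocks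
            (!![lam, (d1 * ρ) / d2, -(ρ / d2);
                (d1 * c ^ 2) / (ρ * d2), lam, 0;
                -(c ^ 2 / (ρ * d2)), 0, lam] : Matrix (Fin 3) (Fin 3) ℝ)
            0 0 (!![lam, 0, 0, 0; 0, lam, 0, 0; 0, 0, lam, 0; 0, 0, 0, lam] :
              Matrix (Fin 4) (Fin 4) ℝ)) := by
      ext i j
      fin_cases i <;> fin_cases j <;> rfl
    have hD : (!![lam, 0, 0, 0; 0, lam, 0, 0; 0, 0, lam, 0; 0, 0, 0, lam] :
        Matrix (Fin 4) (Fin 4) ℝ).det = lam ^ 4 := by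
      simp [Matrix.det_succ_row_zero, Fin.sum_univ_succ]
      ring
    rw [hM, Matrix.det_reindex_self, Matrix.det_fromBlocks_zero₂₁, Matrix.det_fin_three, hD]
    try simp only [Matrix.cons_val_zero, Matrix.cons_val_one, Matrix.head_cons,
      Matrix.cons_val_two, Matrix.head_fin_const, Matrix.cons_val', Matrix.empty_val',
      Matrix.cons_val_fin_one, Matrix.vecHead, Matrix.vecTail, Matrix.of_apply, Function.comp_apply, Matrix.cons_val_succ]
    field_simp
    ring
  · rw [hB]
    set B : Matrix (Fin 7) (Fin 7) ℝ := !![0, -(d1 * ρ) / d2, ρ / d2, 0, 0, 0, 0;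
      -(d1 * c ^ 2) / (ρ * d2), 0, 0, 0, 0, 0, 0;
      c ^ 2 / (ρ * d2), 0, 0, 0, 0, 0, 0;
      0, 0, 0, 0, 0, 0, 0;
      0, 0, 0, 0, 0, 0, 0;
      0, 0, 0, 0, 0, 0, 0;
      0, 0, 0, 0, 0, 0, 0] with hBdef
    have hle : B.rank ≤ 2 := by
      have hfac : B = (!![(1:ℝ), 0; 0, -d1; 0, 1; 0, 0; 0, 0; 0, 0; 0, 0] :
          Matrix (Fin 7) (Fin 2) ℝ) *
          (!![0, -(d1 * ρ) / d2, ρ / d2, 0, 0, 0, 0;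
             c ^ 2 / (ρ * d2), 0, 0, 0, 0, 0, 0] : Matrix (Fin 2) (Fin 7) ℝ) := by
        ext i j
        fin_cases i <;> fin_cases j <;>
          simp only [hBdef, Matrix.mul_apply, Fin.sum_univ_two, Matrix.of_apply,
            vec7_0, vec7_1, vec7_2, vec7_3, vec7_4, vec7_5, vec7_6, vec2_0, vec2_1,
            Matrix.cons_val_zero, Matrix.cons_val_one, Matrix.head_cons] <;>
          first | rfl | ring | norm_num
      rw [hfac]
      exact le_trans (Matrix.rank_mul_le_left _ _) (Matrix.rank_le_width _)
    have hge : 2 ≤ B.rank := by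
      have hprod : (!![(1:ℝ), 0, 0, 0, 0, 0, 0; 0, 0, 1, 0, 0, 0, 0] :
          Matrix (Fin 2) (Fin 7) ℝ) * B *
          (!![(0:ℝ), 1; 0, 0; 1, 0; 0, 0; 0, 0; 0, 0; 0, 0] : Matrix (Fin 7) (Fin 2) ℝ) =
          !![ρ / d2, 0; 0, c ^ 2 / (ρ * d2)] := by
        ext i j
        fin_cases i <;> fin_cases j <;>
          simp only [hBdef, Matrix.mul_apply, Fin.sum_univ_two, Fin.sum_univ_succ,
            Fin.sum_univ_zero, Matrix.of_apply,
            vec7_0, vec7_1, vec7_2, vec7_3, vec7_4, vec7_5, vec7_6, vec2_0, vec2_1,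
            Matrix.cons_val_zero, Matrix.cons_val_one, Matrix.head_cons, Matrix.cons_val_succ,
            Matrix.vecHead, Matrix.vecTail] <;>
          first | rfl | ring | norm_num
      have hunit : IsUnit (!![ρ / d2, 0; 0, c ^ 2 / (ρ * d2)] : Matrix (Fin 2) (Fin 2) ℝ) := by
        rw [Matrix.isUnit_iff_isUnit_det, Matrix.det_fin_two]
        simp only [Matrix.cons_val_zero, Matrix.cons_val_one, Matrix.head_cons,
          Matrix.head_fin_const, Matrix.of_apply, Matrix.cons_val', Matrix.empty_val',
          Matrix.cons_val_fin_one]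
        have h1 : ρ / d2 * (c ^ 2 / (ρ * d2)) - 0 * 0 = c ^ 2 / d2 ^ 2 := by
          field_simp
          ring
        rw [h1]
        exact (by positivity : c ^ 2 / d2 ^ 2 ≠ 0).isUnit
      have h2 : Matrix.rank (!![ρ / d2, 0; 0, c ^ 2 / (ρ * d2)] : Matrix (Fin 2) (Fin 2) ℝ) = 2 :=
        Matrix.rank_of_isUnit _ hunit
      calc (2:ℕ) = Matrix.rank (!![ρ / d2, 0; 0, c ^ 2 / (ρ * d2)] : Matrix (Fin 2) (Fin 2) ℝ) :=
            h2.symm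
        _ ≤ ((!![(1:ℝ), 0, 0, 0, 0, 0, 0; 0, 0, 1, 0, 0, 0, 0] :
          Matrix (Fin 2) (Fin 7) ℝ) * B).rank := by
            rw [← hprod]; exact Matrix.rank_mul_le_left _ _
        _ ≤ B.rank := Matrix.rank_mul_le_right _ _
    omega
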